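/- Let m be a nonnegative integer and k = 4m+3. For every position (x,y,z) ∈ B_k, there exists a position in movek((x,y,z)) that belongs to A_k; that is, movek((x,y,z)) ∩ A_k ≠ ∅. -/

import Mathlib

/-- bitwise z ∧ ¬t -/
def hf (z t : ℕ) : ℕ := z &&& (z ^^^ t)

lemma and_mod_two_iff (a b : ℕ) : (a &&& b) % 2 = 1 ↔ a % 2 = 1 ∧ b % 2 = 1 := by
  have h := Nat.testBit_and a b 0
  simp only [Nat.testBit_zero] at h
  constructor
  · intro hh
    have : (decide (a % 2 = 1) && decide (b % 2 = 1)) = true := by rw [← h]; simp [hh]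
    simpa using this
  · rintro ⟨h1, h2⟩
    have : (decide ((a &&& b) % 2 = 1)) = true := by rw [h]; simp [h1, h2]
    simpa using this

lemma xor_add_two_and : ∀ n a b : ℕ, a + b ≤ n → a + b = (a ^^^ b) + 2 * (a &&& b) := by
  intro n
  induction n with
  | zero =>
    intro a b h
    have ha : a = 0 := by omega
    have hb : b = 0 := by omega
    subst ha; subst hb; simp
  | succ n ih =>
    intro a b h
    rcases Nat.eq_zero_or_pos a with ha | ha
    · subst ha; simp
    rcases Nat.eq_zero_or_pos b with hb | hb
    · subst hb; simp
    have h2 : a / 2 + b / 2 ≤ n := by omega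
    have key := ih (a / 2) (b / 2) h2
    have hx : (a ^^^ b) = 2 * ((a/2) ^^^ (b/2)) + (a ^^^ b) % 2 := by
      have := Nat.div_add_mod (a ^^^ b) 2
      rw [Nat.xor_div_two] at this; omega
    have hand : (a &&& b) = 2 * ((a/2) &&& (b/2)) + (a &&& b) % 2 := by
      have := Nat.div_add_mod (a &&& b) 2
      rw [Nat.and_div_two] at this; omega
    have hxm : (a ^^^ b) % 2 = (a + b) % 2 := Nat.xor_mod_two_eq
    have ham := and_mod_two_iff a b
    have h01 : (a &&& b) % 2 = 0 ∨ (a &&& b) % 2 = 1 := Nat.mod_two_eq_zero_or_one _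
    omega

lemma hf_le (z t : ℕ) : hf z t ≤ z := Nat.and_le_left

lemma hf_zero (z : ℕ) : hf z 0 = z := by simp [hf]

lemma hf_mod_two_iff (z t : ℕ) : hf z t % 2 = 1 ↔ z % 2 = 1 ∧ t % 2 = 0 := by
  unfold hf
  rw [and_mod_two_iff]
  have := Nat.xor_mod_two_eq (m := z) (n := t)
  omega

lemma hf_step (z t : ℕ) : hf z t = 2 * hf (z/2) (t/2) + hf (z%2) (t%2) := by
  have h1 : hf z t / 2 = hf (z/2) (t/2) := by
    unfold hf; rw [Nat.and_div_two, Nat.xor_div_two]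
  have h2 : hf z t % 2 = hf (z%2) (t%2) := by
    have a1 := hf_mod_two_iff z t
    have a2 := hf_mod_two_iff (z%2) (t%2)
    have b1 : z % 2 % 2 = z % 2 := Nat.mod_mod_of_dvd z dvd_rfl
    have : hf (z%2) (t%2) ≤ z % 2 := hf_le _ _
    omega
  omega

lemma hf_split : ∀ (j z t : ℕ), hf z t = 2^j * hf (z / 2^j) (t / 2^j) + hf (z % 2^j) (t % 2^j) := by
  intro j
  induction j with
  | zero => intro z t; simp [hf, Nat.mod_one]
  | succ j ih =>
    intro z t
    have e1 : z / 2 / 2^j = z / 2^(j+1) := by rw [Nat.div_div_eq_div_mul, pow_succ']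
    have e2 : t / 2 / 2^j = t / 2^(j+1) := by rw [Nat.div_div_eq_div_mul, pow_succ']
    have m1 : z % 2^(j+1) / 2 = z / 2 % 2^j := by
      rw [pow_succ', Nat.mod_mul_right_div_self]
    have m2 : t % 2^(j+1) / 2 = t / 2 % 2^j := by
      rw [pow_succ', Nat.mod_mul_right_div_self]
    have m3 : z % 2^(j+1) % 2 = z % 2 := Nat.mod_mod_of_dvd z (by rw [pow_succ']; exact Dvd.intro _ rfl)
    have m4 : t % 2^(j+1) % 2 = t % 2 := Nat.mod_mod_of_dvd t (by rw [pow_succ']; exact Dvd.intro _ rfl)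
    calc hf z t = 2 * hf (z/2) (t/2) + hf (z%2) (t%2) := hf_step z t
    _ = 2 * (2^j * hf (z/2/2^j) (t/2/2^j) + hf (z/2 % 2^j) (t/2 % 2^j)) + hf (z%2) (t%2) := by rw [ih]
    _ = 2^(j+1) * hf (z / 2^(j+1)) (t / 2^(j+1)) + (2 * hf (z % 2^(j+1) / 2) (t % 2^(j+1) / 2) + hf (z % 2^(j+1) % 2) (t % 2^(j+1) % 2)) := by
        rw [e1, e2, m1, m2, m3, m4]; ring
    _ = 2^(j+1) * hf (z / 2^(j+1)) (t / 2^(j+1)) + hf (z % 2^(j+1)) (t % 2^(j+1)) := by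
        rw [← hf_step]

/-- key arithmetic identity: (t ^^^ z) + z = t + 2 * (z ∧ ¬t) -/
lemma xor_add_eq (t z : ℕ) : (t ^^^ z) + z = t + 2 * hf z t := by
  have h1 := xor_add_two_and (t + z) t z le_rfl
  -- hf z t = z - (t &&& z) : show hf z t + (z &&& t) = z
  have h2 : hf z t + (z &&& t) = z := by
    have hA : (hf z t) &&& (z &&& t) = 0 := by
      apply Nat.eq_of_testBit_eq
      intro i
      simp only [hf, Nat.testBit_and, Nat.testBit_xor, Nat.zero_testBit]
      cases z.testBit i <;> cases t.testBit i <;> rfl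
    have hX : (hf z t) ^^^ (z &&& t) = z := by
      apply Nat.eq_of_testBit_eq
      intro i
      simp only [hf, Nat.testBit_and, Nat.testBit_xor]
      cases z.testBit i <;> cases t.testBit i <;> rfl
    have := xor_add_two_and (hf z t + (z &&& t)) (hf z t) (z &&& t) le_rfl
    rw [hA, hX] at this
    omega
  have h3 : t &&& z = z &&& t := Nat.and_comm t z
  omega

lemma hf_one_right (a : ℕ) (ha : a ≤ 1) : hf a 1 = 0 := by
  interval_cases a <;> decide

lemma split_form (Q : ℕ) (hQ : 0 < Q) (u : ℕ) (hu : u < 2 * Q) :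
    ∃ a b, a ≤ 1 ∧ b < Q ∧ u = Q * a + b := by
  refine ⟨u / Q, u % Q, ?_, Nat.mod_lt _ hQ, (Nat.div_add_mod u Q).symm⟩
  have : u / Q < 2 := Nat.div_lt_of_lt_mul (by omega)
  omega

lemma hf_split' (Q : ℕ) (j : ℕ) (hQ : Q = 2^j) (a b th tl : ℕ) (hb : b < Q) (htl : tl < Q) :
    hf (Q * a + b) (Q * th + tl) = Q * hf a th + hf b tl := by
  have h1 : (Q * a + b) / Q = a := by
    rw [Nat.mul_add_div (by rw [hQ]; positivity), Nat.div_eq_of_lt hb, add_zero]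
  have h2 : (Q * a + b) % Q = b := by
    rw [Nat.mul_add_mod, Nat.mod_eq_of_lt hb]
  have h3 : (Q * th + tl) / Q = th := by
    rw [Nat.mul_add_div (by rw [hQ]; positivity), Nat.div_eq_of_lt htl, add_zero]
  have h4 : (Q * th + tl) % Q = tl := by
    rw [Nat.mul_add_mod, Nat.mod_eq_of_lt htl]
  have := hf_split j (Q * a + b) (Q * th + tl)
  rw [← hQ, h1, h2, h3, h4] at this
  exact this

lemma hf_mono (c : ℕ) : ∀ d : ℕ, ∀ M : ℤ, ((2:ℤ)^d) ∣ M → ∀ z t t' : ℕ,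
    z < 2^(d+1) → t < 2^(d+1) → t' ≤ t →
    (c*t : ℤ) - M ≤ (hf z t : ℤ) → (c*t' : ℤ) - M ≤ (hf z t' : ℤ) := by
  intro d
  induction d with
  | zero =>
    intro M _ z t t' hz ht ht' hyp
    have hz2 : z ≤ 1 := by omega
    rcases Nat.eq_or_lt_of_le ht' with rfl | hlt
    · exact hyp
    · have h1 : t = 1 := by omega
      have h0 : t' = 0 := by omega
      subst h1; subst h0
      rw [hf_one_right z hz2] at hyp
      rw [hf_zero]
      have hc : (0:ℤ) ≤ (c:ℤ) := Int.natCast_nonneg c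
      have hz' : (0:ℤ) ≤ (z:ℤ) := Int.natCast_nonneg z
      push_cast at hyp ⊢
      linarith
  | succ d ih =>
    intro M hM z t t' hz ht ht' hyp
    set Q : ℕ := 2^(d+1) with hQ
    have hQpos : 0 < Q := by positivity
    have hQZ : (Q:ℤ) = 2^(d+1) := by push_cast [hQ]; ring
    have hdvdQ : ((2:ℤ)^d) ∣ (Q:ℤ) := by rw [hQZ]; exact ⟨2, by ring⟩
    have hdvdM : ((2:ℤ)^d) ∣ M := dvd_trans ⟨2, by ring⟩ hM
    obtain ⟨a, b, ha, hb, rfl⟩ := split_form Q hQpos z (by rw [hQ]; rw [pow_succ] at hz; omega)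
    obtain ⟨th, tl, hth, htl, rfl⟩ := split_form Q hQpos t (by rw [hQ]; rw [pow_succ] at ht; omega)
    obtain ⟨th', tl', hth', htl', rfl⟩ := split_form Q hQpos t' (by rw [hQ]; rw [pow_succ] at ht; omega)
    rw [hf_split' Q (d+1) hQ a b th tl hb htl] at hyp
    rw [hf_split' Q (d+1) hQ a b th' tl' hb htl']
    have hthh : th' ≤ th := by
      by_contra hcon
      push_neg at hcon
      have : th = 0 ∧ th' = 1 := by omega
      obtain ⟨rfl, rfl⟩ := this
      omega
    rcases Nat.le_one_iff_eq_zero_or_eq_one.mp hth with rfl | rfl <;>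
      rcases Nat.le_one_iff_eq_zero_or_eq_one.mp hth' with rfl | rfl
    · -- th = 0, th' = 0
      simp only [Nat.mul_zero, Nat.zero_add, Nat.mul_one] at hyp ht' ⊢
      rw [hf_zero] at hyp ⊢
      have key := ih (M + (Q:ℤ) * a) (dvd_add hdvdM (Dvd.dvd.mul_right hdvdQ _))
        b tl tl' hb htl ht'
        (by push_cast at hyp ⊢; linarith)
      push_cast at key ⊢; linarith
    · omega
    · -- th = 1, th' = 0
      simp only [Nat.mul_zero, Nat.zero_add, Nat.mul_one] at hyp ht' ⊢
      rw [hf_one_right a ha] at hyp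
      rw [hf_zero]
      simp only [Nat.mul_zero, Nat.zero_add] at hyp
      have hle : (hf b tl : ℤ) ≤ (b:ℤ) := by exact_mod_cast hf_le b tl
      have hbZ : (b:ℤ) ≤ (Q:ℤ) - 1 := by
        have : (b:ℤ) < (Q:ℤ) := by exact_mod_cast hb
        omega
      have hMbig : M ≥ ((c:ℤ) - 1) * Q + 1 := by
        push_cast at hyp
        nlinarith [Int.natCast_nonneg c, Int.natCast_nonneg tl]
      obtain ⟨j, hj⟩ := hM
      have hQZpos : (0:ℤ) < (Q:ℤ) := by exact_mod_cast hQpos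
      have hjc : (c:ℤ) ≤ j := by
        rw [hj, ← hQZ] at hMbig
        nlinarith
      have hMQ : M ≥ (c:ℤ) * Q := by
        rw [hj, ← hQZ]
        nlinarith
      have h1 : (c:ℤ) * tl' ≤ (c:ℤ) * Q := by
        have h := (show (tl':ℤ) ≤ Q by exact_mod_cast le_of_lt htl')
        exact mul_le_mul_of_nonneg_left h (Int.natCast_nonneg c)
      have h2 : (0:ℤ) ≤ ((Q * a + hf b tl' : ℕ) : ℤ) := Int.natCast_nonneg _
      push_cast at h2 ⊢
      linarith
    · -- th = 1, th' = 1
      simp only [Nat.mul_one] at hyp ht' ⊢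
      rw [hf_one_right a ha] at hyp ⊢
      simp only [Nat.mul_zero, Nat.zero_add] at hyp ⊢
      have htt : tl' ≤ tl := by omega
      have key := ih (M - (c:ℤ) * Q) (dvd_sub hdvdM (Dvd.dvd.mul_left hdvdQ _))
        b tl tl' hb htl htt
        (by push_cast at hyp ⊢; linarith)
      push_cast at key ⊢; linarith

/-- fixpoint existence -/
lemma hf_fix (c : ℕ) : ∀ z : ℕ, ∃ τ : ℕ, c * τ ≤ hf z τ ∧ hf z τ ≤ c * (τ + 1) := by
  intro z
  induction z using Nat.strong_induction_on with
  | _ z ih =>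
    rcases Nat.eq_zero_or_pos z with rfl | hz
    · exact ⟨0, by simp [hf]⟩
    obtain ⟨τ', h1, h2⟩ := ih (z / 2) (Nat.div_lt_self hz (by norm_num))
    have key0 : hf z (2 * τ') = 2 * hf (z/2) τ' + (z % 2) := by
      have e1 : (2 * τ') / 2 = τ' := by omega
      have e2 : (2 * τ') % 2 = 0 := by omega
      rw [hf_step z (2 * τ'), e1, e2, hf_zero]
    have key1 : hf z (2 * τ' + 1) = 2 * hf (z/2) τ' := by
      have e1 : (2 * τ' + 1) / 2 = τ' := by omega
      have e2 : (2 * τ' + 1) % 2 = 1 := by omega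
      rw [hf_step z (2 * τ' + 1), e1, e2, hf_one_right _ (by omega)]
      omega
    have hb : z % 2 ≤ 1 := by omega
    rcases Nat.lt_or_ge (2 * hf (z/2) τ' + (z % 2)) (2 * (c * τ') + c + 1) with hcase | hcase
    · refine ⟨2 * τ', ?_, ?_⟩
      · rw [key0]
        have e : c * (2 * τ') = 2 * (c * τ') := by ring
        linarith [h1, Nat.zero_le (z % 2)]
      · rw [key0]
        have e : c * (2 * τ' + 1) = 2 * (c * τ') + c := by ring
        linarith [hcase]
    · refine ⟨2 * τ' + 1, ?_, ?_⟩
      · rw [key1]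
        have e : c * (2 * τ' + 1) = 2 * (c * τ') + c := by ring
        linarith [hcase, hb]
      · rw [key1]
        have e : c * (2 * τ' + 1 + 1) = 2 * (c * (τ' + 1)) := by ring
        linarith [h2]

/-- if cτ ≤ hf z τ and hf z y < cy then τ < y -/
lemma hf_lt (c z τ y : ℕ) (hτ : c * τ ≤ hf z τ) (hy : hf z y < c * y) : τ < y := by
  by_contra hcon
  push_neg at hcon  -- y ≤ τ
  set d := z + τ with hd
  have hzd : z < 2^(d+1) := lt_of_lt_of_le (Nat.lt_two_pow_self (n := z)) (Nat.pow_le_pow_right (by norm_num) (by omega))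
  have hτd : τ < 2^(d+1) := lt_of_lt_of_le (Nat.lt_two_pow_self (n := τ)) (Nat.pow_le_pow_right (by norm_num) (by omega))
  have hcast : ((c:ℤ) * τ) - 0 ≤ (hf z τ : ℤ) := by
    rw [sub_zero]
    exact_mod_cast hτ
  have := hf_mono c d 0 (dvd_zero _) z τ y hzd hτd hcon hcast
  have : (c * y : ℤ) ≤ (hf z y : ℤ) := by simpa using this
  have : c * y ≤ hf z y := by exact_mod_cast this
  omega

/-- The set of positions reachable in one move from (x, y, z) in the
triangular chocolate bar game. -/
def movek (k : ℕ) (p : ℕ × ℕ × ℕ) : Set (ℕ × ℕ × ℕ) :=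
  {q | (∃ u < p.1, q = (u, p.2.1, p.2.2)) ∨
       (∃ v < p.2.1, q = (p.1, v, p.2.2)) ∨
       (∃ w < p.2.2, q = (p.1, p.2.1, w)) ∨
       (∃ u < p.1, q = (u, min p.2.1 ((u + p.2.2) / k), p.2.2)) ∨
       (∃ w < p.2.2, q = (p.1, min p.2.1 ((p.1 + w) / k), w))}

/-- A_k = { (x,y,z) : y ≤ ⌊(x+z)/k⌋ and x ⊕ y ⊕ z = 0 }. -/
def Ak (k : ℕ) : Set (ℕ × ℕ × ℕ) :=
  {p | p.2.1 ≤ (p.1 + p.2.2) / k ∧ p.1 ^^^ p.2.1 ^^^ p.2.2 = 0}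

/-- B_k = { (x,y,z) : y ≤ ⌊(x+z)/k⌋ and x ⊕ y ⊕ z ≠ 0 }. -/
def Bk (k : ℕ) : Set (ℕ × ℕ × ℕ) :=
  {p | p.2.1 ≤ (p.1 + p.2.2) / k ∧ p.1 ^^^ p.2.1 ^^^ p.2.2 ≠ 0}

lemma core (c k : ℕ) (hkc : k = 2*c+1) (y b : ℕ) (hlow : (y ^^^ b) + b < k * y) :
    ∃ τ, τ < y ∧ k * τ ≤ (τ ^^^ b) + b ∧ (τ ^^^ b) + b < k * (τ+1) := by
  have hyb := xor_add_eq y b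
  have hHy : hf b y < c * y := by
    have e : k * y = 2 * (c * y) + y := by rw [hkc]; ring
    omega
  obtain ⟨τ, hτ1, hτ2⟩ := hf_fix c b
  have hτy : τ < y := hf_lt c b τ y hτ1 hHy
  have hτb := xor_add_eq τ b
  refine ⟨τ, hτy, ?_, ?_⟩
  · have e : k * τ = 2 * (c * τ) + τ := by rw [hkc]; ring
    omega
  · have e : k * (τ+1) = 2 * (c * (τ+1)) + τ + 1 := by rw [hkc]; ring
    omega

theorem stmt15 (m k : ℕ) (hk : k = 4 * m + 3) :
    ∀ p ∈ Bk k, (movek k p ∩ Ak k).Nonempty := by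
  rintro ⟨x, y, z⟩ ⟨hy, hs⟩
  simp only at hy hs
  have hkpos : 0 < k := by omega
  set c : ℕ := 2 * m + 1 with hc
  have hkc : k = 2 * c + 1 := by omega
  have hkxz : k * y ≤ x + z := by
    have h := (Nat.le_div_iff_mul_le hkpos).mp hy
    rw [Nat.mul_comm] at h
    exact h
  rcases Nat.xor_trichotomy hs with hcase | hcase | hcase
  · -- y ^^^ z < x
    by_cases h2 : y ≤ ((y ^^^ z) + z) / k
    · refine ⟨(y ^^^ z, y, z), Or.inl ⟨y ^^^ z, hcase, rfl⟩, h2, ?_⟩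
      show (y ^^^ z) ^^^ y ^^^ z = 0
      rw [Nat.xor_comm y z, xor_cancel_right, Nat.xor_self]
    · push_neg at h2
      have hlow : (y ^^^ z) + z < k * y := by
        have h := (Nat.div_lt_iff_lt_mul hkpos).mp h2
        rw [Nat.mul_comm] at h
        exact h
      obtain ⟨τ, hτy, hlo, hhi⟩ := core c k hkc y z hlow
      set u := τ ^^^ z with hu
      have hdiv : (u + z) / k = τ := by
        apply Nat.div_eq_of_lt_le
        · rw [Nat.mul_comm]; exact hlo
        · rw [Nat.mul_comm]; exact hhi
      have hux : u < x := by
        have h3 : k * (τ + 1) ≤ k * y := Nat.mul_le_mul_left k hτy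
        omega
      refine ⟨(u, min y ((u + z) / k), z),
        Or.inr (Or.inr (Or.inr (Or.inl ⟨u, hux, rfl⟩))), ?_, ?_⟩
      · exact min_le_right _ _
      · show u ^^^ min y ((u + z) / k) ^^^ z = 0
        rw [hdiv, min_eq_right hτy.le, hu, Nat.xor_comm τ z, xor_cancel_right, Nat.xor_self]
  · -- z ^^^ x < y
    have hxz : x ^^^ z < y := by rwa [Nat.xor_comm]
    refine ⟨(x, x ^^^ z, z), Or.inr (Or.inl ⟨x ^^^ z, hxz, rfl⟩), le_trans hxz.le hy, ?_⟩
    show x ^^^ (x ^^^ z) ^^^ z = 0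
    rw [xor_cancel_left, Nat.xor_self]
  · -- x ^^^ y < z
    by_cases h2 : y ≤ (x + (x ^^^ y)) / k
    · refine ⟨(x, y, x ^^^ y), Or.inr (Or.inr (Or.inl ⟨x ^^^ y, hcase, rfl⟩)), h2, ?_⟩
      show x ^^^ y ^^^ (x ^^^ y) = 0
      exact Nat.xor_self _
    · push_neg at h2
      have hlow : (y ^^^ x) + x < k * y := by
        have h := (Nat.div_lt_iff_lt_mul hkpos).mp h2
        rw [Nat.mul_comm] at h
        rw [Nat.xor_comm y x]
        omega
      obtain ⟨τ, hτy, hlo, hhi⟩ := core c k hkc y x hlow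
      set w := τ ^^^ x with hw
      have hdiv : (x + w) / k = τ := by
        rw [Nat.add_comm]
        apply Nat.div_eq_of_lt_le
        · rw [Nat.mul_comm]; exact hlo
        · rw [Nat.mul_comm]; exact hhi
      have hwz : w < z := by
        have h3 : k * (τ + 1) ≤ k * y := Nat.mul_le_mul_left k hτy
        omega
      refine ⟨(x, min y ((x + w) / k), w),
        Or.inr (Or.inr (Or.inr (Or.inr ⟨w, hwz, rfl⟩))), ?_, ?_⟩
      · exact min_le_right _ _
      · show x ^^^ min y ((x + w) / k) ^^^ w = 0
        rw [hdiv, min_eq_right hτy.le, hw, Nat.xor_comm τ x]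
        exact Nat.xor_self _
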